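/- Summability from subquadratic check soundness on expander graphs: Let Δ ≥ 2 be an integer, c_f > 0, and 0 < β < 1, and let f be an increasing bijection of [0,∞) with f(M) ≤ c_f·M^{2−β} for all M ≥ 0. Then there exist constants c'_f, c''_f > 0 depending only on Δ, c_f, β such that, setting α := (1−β)/β, for every cutoff d_c > 0 and every δκ > 0: Σ over integers r ≥ 1 with f̃(r) < d_c of Δ^r·exp(−δκ·f̃(r)) is at most c''_f·exp(c'_f·(δκ)^{−α}), where f̃ is defined recursively by f̃(1) = f⁻¹(1) and f̃(r+1) = f⁻¹( f(f̃(r)) + min(d_c, f̃(r))/Δ ). -/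

import Mathlib

noncomputable section

lemma aux_exp_le (s : ℝ) : Real.exp s ≤ 1 + s * Real.exp s := by
  have h := Real.add_one_le_exp (-s)
  have hpos := Real.exp_pos s
  have h2 : (-s + 1) * Real.exp s ≤ Real.exp (-s) * Real.exp s :=
    mul_le_mul_of_nonneg_right h hpos.le
  rw [← Real.exp_add] at h2
  simp at h2
  nlinarith

lemma aux_pow (q ε u : ℝ) (hq : 1 ≤ q) (hε0 : 0 < ε) (hε1 : ε ≤ 1) (hu : 1 ≤ u) :
    (u + ε) ^ q ≤ u ^ q + (q * Real.exp q * ε) * u ^ (q - 1) := by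
  have hu0 : (0:ℝ) < u := lt_of_lt_of_le one_pos hu
  set t : ℝ := ε / u with ht_def
  have ht0 : 0 < t := div_pos hε0 hu0
  have ht1 : t ≤ 1 := by
    rw [ht_def, div_le_one hu0]; linarith
  have h1 : (1 + t) ^ q ≤ Real.exp (q * t) := by
    rw [Real.rpow_def_of_pos (by linarith)]
    apply Real.exp_le_exp.mpr
    have hlog : Real.log (1 + t) ≤ t := by
      have := Real.log_le_sub_one_of_pos (show (0:ℝ) < 1 + t by linarith)
      linarith
    have hq0 : 0 ≤ q := by linarith
    calc Real.log (1 + t) * q ≤ t * q := by nlinarith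
      _ = q * t := by ring
  have h2 : Real.exp (q * t) ≤ 1 + (q * t) * Real.exp q := by
    have := aux_exp_le (q * t)
    have hmono : Real.exp (q * t) ≤ Real.exp q := Real.exp_le_exp.mpr (by nlinarith)
    nlinarith [Real.exp_pos (q*t), mul_nonneg (mul_nonneg (by linarith : (0:ℝ) ≤ q) ht0.le) (Real.exp_pos (q*t)).le]
  have hsplit : u + ε = u * (1 + t) := by
    rw [ht_def]; field_simp
  have hmul : (u + ε) ^ q = u ^ q * (1 + t) ^ q := by
    rw [hsplit, Real.mul_rpow hu0.le (by linarith)]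
  have hdiv : u ^ q * u⁻¹ = u ^ (q - 1) := by
    rw [Real.rpow_sub hu0, Real.rpow_one, div_eq_mul_inv]
  have huq : (0:ℝ) ≤ u ^ q := Real.rpow_nonneg hu0.le q
  calc (u + ε) ^ q = u ^ q * (1 + t) ^ q := hmul
    _ ≤ u ^ q * (1 + (q * t) * Real.exp q) :=
        mul_le_mul_of_nonneg_left (le_trans h1 h2) huq
    _ = u ^ q + (q * Real.exp q * ε) * (u ^ q * u⁻¹) := by
        rw [ht_def]; field_simp
    _ = u ^ q + (q * Real.exp q * ε) * u ^ (q - 1) := by rw [hdiv]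

lemma aux_geo (R : ℕ) : ∑ r ∈ Finset.Icc 1 R, ((2:ℝ)⁻¹) ^ r ≤ 1 - (2⁻¹:ℝ) ^ R := by
  induction R with
  | zero => simp
  | succ n ih =>
    rw [Finset.sum_Icc_succ_top (Nat.succ_le_succ (Nat.zero_le n))]
    rw [pow_succ] at *
    linarith

/-- The recursively defined radius function `f̃`: `f̃(1) = f⁻¹(1)` and
`f̃(r+1) = f⁻¹( f(f̃(r)) + min(cutoff, f̃(r))/Δ )`. -/
def ftilde (f finv : ℝ → ℝ) (cutoff Δ : ℝ) : ℕ → ℝ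
  | 0 => finv 1
  | 1 => finv 1
  | (r + 2) => finv (f (ftilde f finv cutoff Δ (r + 1))
      + min cutoff (ftilde f finv cutoff Δ (r + 1)) / Δ)

set_option maxHeartbeats 2000000 in
/-- Summability from subquadratic check soundness on expander graphs.
For `Δ ≥ 2`, `c_f > 0`, `0 < β < 1` and an increasing bijection `f` of `[0,∞)` with
`f(M) ≤ c_f·M^{2−β}`, there are constants `c'_f, c''_f > 0` depending only on
`Δ, c_f, β` such that, with `α = (1−β)/β`, for every cutoff `d_c > 0` and every
`δκ > 0`, every partial sum of `Σ_{r ≥ 1, f̃(r) < d_c} Δ^r·exp(−δκ·f̃(r))` is at most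
`c''_f·exp(c'_f·δκ^{−α})`. -/
theorem summability_from_subquadratic_check_soundness
    (Δ : ℕ) (hΔ : 2 ≤ Δ) (c_f β : ℝ) (hcf : 0 < c_f) (hβ0 : 0 < β) (hβ1 : β < 1)
    (f finv : ℝ → ℝ)
    (hf_mono : StrictMonoOn f (Set.Ici 0))
    (hf_nonneg : ∀ x : ℝ, 0 ≤ x → 0 ≤ f x)
    (hfinv_nonneg : ∀ x : ℝ, 0 ≤ x → 0 ≤ finv x)
    (hf_left : ∀ x : ℝ, 0 ≤ x → finv (f x) = x)
    (hf_right : ∀ x : ℝ, 0 ≤ x → f (finv x) = x)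
    (hgrow : ∀ M : ℝ, 0 ≤ M → f M ≤ c_f * M ^ ((2 : ℝ) - β)) :
    ∃ c'f c''f : ℝ, 0 < c'f ∧ 0 < c''f ∧
      ∀ dc : ℝ, 0 < dc → ∀ δκ : ℝ, 0 < δκ → ∀ R : ℕ,
        (∑ r ∈ Finset.Icc 1 R,
          if ftilde f finv dc Δ r < dc then
            (Δ : ℝ) ^ r * Real.exp (-(δκ * ftilde f finv dc Δ r))
          else 0)
        ≤ c''f * Real.exp (c'f * δκ ^ (-((1 - β) / β))) := by
  have h1β : (0:ℝ) < 1 - β := by linarith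
  have h2β : (0:ℝ) < 2 - β := by linarith
  have hΔR : (0:ℝ) < (Δ:ℝ) := by positivity
  have hΔ2 : (2:ℝ) ≤ (Δ:ℝ) := by exact_mod_cast hΔ
  have hlogΔ : 0 < Real.log Δ := Real.log_pos (by linarith)
  set α : ℝ := (1 - β) / β with hα_def
  set p : ℝ := (2 - β)⁻¹ with hp_def
  set q : ℝ := (2 - β) / (1 - β) with hq_def
  set s : ℝ := (1 - β)⁻¹ with hs_def
  have hp0 : 0 < p := by rw [hp_def]; positivity
  have hq1 : 1 ≤ q := by
    rw [hq_def, le_div_iff₀ h1β]; linarith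
  have hq0 : 0 < q := lt_of_lt_of_le one_pos hq1
  have hs1 : 1 < s := by
    rw [hs_def]
    rw [one_lt_inv_iff₀]
    constructor <;> linarith
  have hqp : q * p = s := by
    rw [hq_def, hp_def, hs_def]; field_simp
  have hq1s : q - 1 = s := by
    rw [hq_def, hs_def]; field_simp; norm_num
  have hαs : α * (s - 1) = 1 := by
    rw [hα_def, hs_def]; field_simp; ring
  have h2βp : (2 - β) * p = 1 := mul_inv_cancel₀ h2β.ne'
  set cp : ℝ := c_f ^ p with hcp_def
  have hcp : 0 < cp := Real.rpow_pos_of_pos hcf p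
  set ε : ℝ := min 1 ((q * Real.exp q * cp * Δ)⁻¹) with hε_def
  have hε0 : 0 < ε := lt_min one_pos (by positivity)
  have hε1 : ε ≤ 1 := min_le_left _ _
  have hεkey : q * Real.exp q * ε ≤ (cp * Δ)⁻¹ := by
    have h : ε ≤ (q * Real.exp q * cp * ↑Δ)⁻¹ := min_le_right _ _
    have hE : (0:ℝ) < Real.exp q := Real.exp_pos q
    have h2 : q * Real.exp q * (q * Real.exp q * cp * ↑Δ)⁻¹ = (cp * ↑Δ)⁻¹ := by
      field_simp
    calc q * Real.exp q * ε ≤ q * Real.exp q * (q * Real.exp q * cp * ↑Δ)⁻¹ :=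
          mul_le_mul_of_nonneg_left h (by positivity)
      _ = (cp * ↑Δ)⁻¹ := h2
  set c2 : ℝ := ε ^ s / cp with hc2_def
  have hc2 : 0 < c2 := by
    rw [hc2_def]; exact div_pos (Real.rpow_pos_of_pos hε0 s) hcp
  set K : ℝ := 2 * Real.log Δ / c2 with hK_def
  have hK : 0 < K := by rw [hK_def]; positivity
  refine ⟨2 * Real.log Δ * K ^ α, 1, by positivity, one_pos, ?_⟩
  intro dc hdc δκ hδκ R
  set x : ℕ → ℝ := ftilde f finv dc Δ with hx_def
  have hx_eq : ∀ m : ℕ, x (m + 2) = finv (f (x (m + 1)) + min dc (x (m + 1)) / ↑Δ) := by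
    intro m; rfl
  have hf0 : f 0 = 0 := by
    have h := hgrow 0 le_rfl
    rw [Real.zero_rpow (by linarith : (2:ℝ) - β ≠ 0), mul_zero] at h
    exact le_antisymm h (hf_nonneg 0 le_rfl)
  have hrev : ∀ a b : ℝ, 0 ≤ a → 0 ≤ b → f a < f b → a < b := by
    intro a b ha hb h
    exact (hf_mono.lt_iff_lt (Set.mem_Ici.mpr ha) (Set.mem_Ici.mpr hb)).mp h
  have hfx1 : f (x 1) = 1 := hf_right 1 one_pos.le
  have hxnn : ∀ r : ℕ, 0 ≤ x r := by
    intro r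
    induction r with
    | zero => exact hfinv_nonneg 1 one_pos.le
    | succ n ih =>
      cases n with
      | zero => exact hfinv_nonneg 1 one_pos.le
      | succ m =>
        rw [hx_eq m]
        exact hfinv_nonneg _ (add_nonneg (hf_nonneg _ ih)
          (div_nonneg (le_min hdc.le ih) hΔR.le))
  have hfeq : ∀ m : ℕ, f (x (m + 2)) = f (x (m + 1)) + min dc (x (m + 1)) / ↑Δ := by
    intro m
    rw [hx_eq m]
    exact hf_right _ (add_nonneg (hf_nonneg _ (hxnn _))
      (div_nonneg (le_min hdc.le (hxnn _)) hΔR.le))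
  have hxpos : ∀ n : ℕ, 0 < x (n + 1) := by
    intro n
    induction n with
    | zero =>
      refine hrev 0 (x 1) le_rfl (hxnn 1) ?_
      rw [hf0, hfx1]; norm_num
    | succ m ih =>
      refine hrev 0 (x (m + 2)) le_rfl (hxnn _) ?_
      rw [hf0, hfeq m]
      have h1 : 0 < min dc (x (m + 1)) / ↑Δ := div_pos (lt_min hdc ih) hΔR
      have h2 : 0 ≤ f (x (m + 1)) := hf_nonneg _ (hxnn _)
      linarith
  have hmono1 : ∀ m : ℕ, x (m + 1) < x (m + 2) := by
    intro m
    refine hrev _ _ (hxnn _) (hxnn _) ?_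
    rw [hfeq m]
    have h1 : 0 < min dc (x (m + 1)) / ↑Δ := div_pos (lt_min hdc (hxpos m)) hΔR
    linarith
  have hstep_low : ∀ n : ℕ, (1 + ε * ↑n) ^ q ≤ f (x (n + 1)) →
      (1 + ε * ↑n) ^ (q - 1) / cp ≤ x (n + 1) := by
    intro n hih
    have hu : (1:ℝ) ≤ 1 + ε * n := by
      have h0 : (0:ℝ) ≤ ε * n := by positivity
      linarith
    have hu0 : (0:ℝ) < 1 + ε * n := by linarith
    have hFnn : 0 ≤ f (x (n + 1)) := hf_nonneg _ (hxnn _)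
    have hd1 : f (x (n + 1)) / c_f ≤ x (n + 1) ^ ((2:ℝ) - β) :=
      (div_le_iff₀ hcf).mpr (by rw [mul_comm]; exact hgrow _ (hxnn _))
    have hd2 : (f (x (n + 1)) / c_f) ^ p ≤ x (n + 1) := by
      calc (f (x (n + 1)) / c_f) ^ p ≤ (x (n + 1) ^ ((2:ℝ) - β)) ^ p :=
            Real.rpow_le_rpow (div_nonneg hFnn hcf.le) hd1 hp0.le
        _ = x (n + 1) ^ (((2:ℝ) - β) * p) := (Real.rpow_mul (hxnn _) _ _).symm
        _ = x (n + 1) := by rw [h2βp, Real.rpow_one]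
    have hd3 : ((1 + ε * ↑n) ^ q / c_f) ^ p ≤ x (n + 1) := by
      refine le_trans (Real.rpow_le_rpow (by positivity) ?_ hp0.le) hd2
      gcongr
    have e1 : ((1 + ε * ↑n) ^ q / c_f) ^ p = (1 + ε * ↑n) ^ (q * p) / cp := by
      rw [Real.div_rpow (Real.rpow_nonneg hu0.le q) hcf.le, ← Real.rpow_mul hu0.le, hcp_def]
    calc (1 + ε * ↑n) ^ (q - 1) / cp = (1 + ε * ↑n) ^ (q * p) / cp := by rw [hq1s, hqp]
      _ = ((1 + ε * ↑n) ^ q / c_f) ^ p := e1.symm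
      _ ≤ x (n + 1) := hd3
  have hF_lb : ∀ n : ℕ, x (n + 1) < dc → (1 + ε * ↑n) ^ q ≤ f (x (n + 1)) := by
    intro n
    induction n with
    | zero =>
      intro _
      simp only [Nat.cast_zero, mul_zero, add_zero, Real.one_rpow, hfx1, le_refl]
    | succ n ih =>
      intro h
      have hprev : x (n + 1) < dc := (hmono1 n).trans h
      have hih := ih hprev
      have hu : (1:ℝ) ≤ 1 + ε * n := by
        have h0 : (0:ℝ) ≤ ε * n := by positivity
        linarith
      have hu0 : (0:ℝ) < 1 + ε * n := by linarith
      have hd4 := hstep_low n hih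
      have hfeq2 : f (x (n + 2)) = f (x (n + 1)) + x (n + 1) / ↑Δ := by
        rw [hfeq n, min_eq_right hprev.le]
      have hkey := aux_pow q ε (1 + ε * n) hq1 hε0 hε1 hu
      have hterm : (q * Real.exp q * ε) * (1 + ε * ↑n) ^ (q - 1) ≤ x (n + 1) / ↑Δ := by
        have h1 : (q * Real.exp q * ε) * (1 + ε * ↑n) ^ (q - 1) ≤
            (cp * ↑Δ)⁻¹ * (1 + ε * ↑n) ^ (q - 1) :=
          mul_le_mul_of_nonneg_right hεkey (Real.rpow_nonneg hu0.le _)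
        have h2 : (cp * ↑Δ)⁻¹ * (1 + ε * ↑n) ^ (q - 1) =
            ((1 + ε * ↑n) ^ (q - 1) / cp) / ↑Δ := by
          rw [mul_inv]; ring
        have h3 : ((1 + ε * ↑n) ^ (q - 1) / cp) / ↑Δ ≤ x (n + 1) / ↑Δ := by gcongr
        linarith
      have hcast : (1:ℝ) + ε * (↑(n + 1):ℝ) = (1 + ε * ↑n) + ε := by push_cast; ring
      rw [hcast]
      calc (1 + ε * ↑n + ε) ^ q
          ≤ (1 + ε * ↑n) ^ q + (q * Real.exp q * ε) * (1 + ε * ↑n) ^ (q - 1) := hkey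
        _ ≤ f (x (n + 1)) + x (n + 1) / ↑Δ := add_le_add hih hterm
        _ = f (x (n + 2)) := hfeq2.symm
  have hxlow : ∀ n : ℕ, x (n + 1) < dc → c2 * ((n + 1 : ℕ) : ℝ) ^ s ≤ x (n + 1) := by
    intro n h
    have hd4 := hstep_low n (hF_lb n h)
    have hu0 : (0:ℝ) < 1 + ε * n := by
      have h0 : (0:ℝ) ≤ ε * n := by positivity
      linarith
    have h1 : (ε * ((n + 1 : ℕ) : ℝ)) ^ s ≤ (1 + ε * ↑n) ^ s := by
      refine Real.rpow_le_rpow (by positivity) ?_ (by linarith)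
      push_cast; nlinarith
    have h2 : (ε * ((n + 1 : ℕ) : ℝ)) ^ s = ε ^ s * ((n + 1 : ℕ) : ℝ) ^ s :=
      Real.mul_rpow hε0.le (by positivity)
    have h3 : c2 * ((n + 1 : ℕ) : ℝ) ^ s = ε ^ s * ((n + 1 : ℕ) : ℝ) ^ s / cp := by
      rw [hc2_def]; ring
    have h4 : (1 + ε * ↑n) ^ s / cp ≤ x (n + 1) := by
      rw [← hq1s]; exact hd4
    rw [h3, ← h2]
    calc (ε * ((n + 1 : ℕ) : ℝ)) ^ s / cp ≤ (1 + ε * ↑n) ^ s / cp := by gcongr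
      _ ≤ x (n + 1) := h4
  -- the threshold radius
  set T : ℝ := K / δκ with hT_def
  have hT : 0 < T := div_pos hK hδκ
  set r₀ : ℝ := T ^ α with hr₀_def
  have hr₀ : 0 < r₀ := Real.rpow_pos_of_pos hT α
  have hδκc2T : δκ * c2 * T = 2 * Real.log ↑Δ := by
    rw [hT_def, hK_def]; field_simp
  have hr₀pow : r₀ ^ (s - 1) = T := by
    rw [hr₀_def, ← Real.rpow_mul hT.le, hαs, Real.rpow_one]
  have hexp_eq : 2 * Real.log ↑Δ * r₀ = 2 * Real.log ↑Δ * K ^ α * δκ ^ (-α) := by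
    have e1 : T = K * δκ⁻¹ := by rw [hT_def, div_eq_mul_inv]
    have e2 : T ^ α = K ^ α * δκ ^ (-α) := by
      rw [e1, Real.mul_rpow hK.le (inv_nonneg.mpr hδκ.le), Real.inv_rpow hδκ.le,
        Real.rpow_neg hδκ.le]
    rw [hr₀_def, e2]; ring
  have hterm : ∀ r ∈ Finset.Icc 1 R,
      (if x r < dc then (↑Δ : ℝ) ^ r * Real.exp (-(δκ * x r)) else 0) ≤
        Real.exp (2 * Real.log ↑Δ * r₀) * ((2:ℝ)⁻¹) ^ r := by
    intro r hr
    have hr1 : 1 ≤ r := (Finset.mem_Icc.mp hr).1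
    by_cases hcond : x r < dc
    · rw [if_pos hcond]
      obtain ⟨n, rfl⟩ : ∃ n, r = n + 1 := ⟨r - 1, (Nat.succ_pred_eq_of_pos hr1).symm⟩
      have hxr := hxlow n hcond
      set rr : ℝ := ((n + 1 : ℕ) : ℝ) with hrr_def
      have hrR : (1:ℝ) ≤ rr := by rw [hrr_def]; exact_mod_cast hr1
      have hrpos : (0:ℝ) < rr := by linarith
      have e1 : ((↑Δ : ℝ)) ^ (n + 1) = Real.exp (rr * Real.log ↑Δ) := by
        rw [hrr_def, Real.exp_nat_mul, Real.exp_log hΔR]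
      have e2 : ((2:ℝ)⁻¹) ^ (n + 1) = Real.exp (rr * -Real.log 2) := by
        rw [hrr_def, Real.exp_nat_mul, ← Real.log_inv, Real.exp_log (by norm_num)]
      rw [e1, e2, ← Real.exp_add, ← Real.exp_add]
      apply Real.exp_le_exp.mpr
      have hlog2 : Real.log 2 ≤ Real.log ↑Δ := Real.log_le_log (by norm_num) hΔ2
      have hrs_nn : (0:ℝ) ≤ rr ^ s := Real.rpow_nonneg hrpos.le s
      have hmain : 2 * rr * Real.log ↑Δ ≤ 2 * Real.log ↑Δ * r₀ + δκ * (c2 * rr ^ s) := by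
        rcases le_total rr r₀ with hc | hc
        · have h1 : 0 ≤ δκ * (c2 * rr ^ s) := by positivity
          have h2 := mul_le_mul_of_nonneg_right hc hlogΔ.le
          linarith
        · have hss : rr ^ (s - 1) * rr = rr ^ s := by
            have h5 := Real.rpow_add hrpos (s - 1) 1
            rw [Real.rpow_one] at h5
            rw [show s - 1 + 1 = s by ring] at h5
            exact h5.symm
          have h2 : T ≤ rr ^ (s - 1) := by
            rw [← hr₀pow]
            exact Real.rpow_le_rpow hr₀.le hc (by linarith)
          have h4 : δκ * c2 * T ≤ δκ * c2 * rr ^ (s - 1) :=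
            mul_le_mul_of_nonneg_left h2 (by positivity : (0:ℝ) ≤ δκ * c2)
          have h3 := mul_le_mul_of_nonneg_right h4 hrpos.le
          rw [hδκc2T] at h3
          have h6 : 0 < Real.log ↑Δ * r₀ := mul_pos hlogΔ hr₀
          have h7 : δκ * c2 * rr ^ (s - 1) * rr = δκ * (c2 * rr ^ s) := by
            rw [← hss]; ring
          linarith [h3, h7, h6]
      have hδx : δκ * (c2 * rr ^ s) ≤ δκ * x (n + 1) := by
        have := mul_le_mul_of_nonneg_left hxr hδκ.le
        rw [hrr_def]; exact this
      have hlogrr : rr * Real.log 2 ≤ rr * Real.log ↑Δ :=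
        mul_le_mul_of_nonneg_left hlog2 hrpos.le
      linarith
    · rw [if_neg hcond]
      positivity
  calc (∑ r ∈ Finset.Icc 1 R,
        if x r < dc then (↑Δ : ℝ) ^ r * Real.exp (-(δκ * x r)) else 0)
      ≤ ∑ r ∈ Finset.Icc 1 R, Real.exp (2 * Real.log ↑Δ * r₀) * ((2:ℝ)⁻¹) ^ r :=
        Finset.sum_le_sum hterm
    _ = Real.exp (2 * Real.log ↑Δ * r₀) * ∑ r ∈ Finset.Icc 1 R, ((2:ℝ)⁻¹) ^ r := by
        rw [Finset.mul_sum]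
    _ ≤ Real.exp (2 * Real.log ↑Δ * r₀) * 1 := by
        have hg := aux_geo R
        have h2R : (0:ℝ) ≤ (2⁻¹:ℝ) ^ R := by positivity
        have hE := Real.exp_pos (2 * Real.log ↑Δ * r₀)
        nlinarith
    _ = 1 * Real.exp (2 * Real.log ↑Δ * K ^ α * δκ ^ (-α)) := by
        rw [hexp_eq]; ring
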